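/- For every q ∈ (0,1) and every p ∈ Δ_2, the sequence of iterates (G^n(p))_{n≥1} converges (to a point of the closed simplex). -/
import Mathlib


open Filter Topology

/-- The map G = (G₁,G₂,G₃) on ℝ³ (with parameter q):
G₁(x) = x₁² + 2q x₁ x₃, G₂(x) = x₂² + 2q x₂ x₃,
G₃(x) = x₃² + 2 x₁ x₂ + 2(1−q) x₁ x₃ + 2(1−q) x₂ x₃. -/
noncomputable def Gmap (q : ℝ) (x : ℝ × ℝ × ℝ) : ℝ × ℝ × ℝ :=
  (x.1 ^ 2 + 2 * q * x.1 * x.2.2,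
   x.2.1 ^ 2 + 2 * q * x.2.1 * x.2.2,
   x.2.2 ^ 2 + 2 * x.1 * x.2.1 + 2 * (1 - q) * x.1 * x.2.2
     + 2 * (1 - q) * x.2.1 * x.2.2)

/-- The open simplex Δ₂ ⊆ ℝ³. -/
def simplex2 : Set (ℝ × ℝ × ℝ) :=
  {p | p.1 + p.2.1 + p.2.2 = 1 ∧ 0 < p.1 ∧ 0 < p.2.1 ∧ 0 < p.2.2}

/-- The simplex is invariant. -/
lemma Gmap_mem_simplex2 {q : ℝ} (hq0 : 0 < q) (hq1 : q < 1) {x : ℝ × ℝ × ℝ}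
    (hx : x ∈ simplex2) : Gmap q x ∈ simplex2 := by
  obtain ⟨hs, h1, h2, h3⟩ := hx
  refine ⟨?_, ?_, ?_, ?_⟩
  · show (x.1 ^ 2 + 2 * q * x.1 * x.2.2) + (x.2.1 ^ 2 + 2 * q * x.2.1 * x.2.2)
      + (x.2.2 ^ 2 + 2 * x.1 * x.2.1 + 2 * (1 - q) * x.1 * x.2.2
        + 2 * (1 - q) * x.2.1 * x.2.2) = 1
    linear_combination (x.1 + x.2.1 + x.2.2 + 1) * hs
  · show 0 < x.1 ^ 2 + 2 * q * x.1 * x.2.2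
    nlinarith [mul_pos h1 h3, sq_nonneg x.1]
  · show 0 < x.2.1 ^ 2 + 2 * q * x.2.1 * x.2.2
    nlinarith [mul_pos h2 h3, sq_nonneg x.2.1]
  · show 0 < x.2.2 ^ 2 + 2 * x.1 * x.2.1 + 2 * (1 - q) * x.1 * x.2.2
      + 2 * (1 - q) * x.2.1 * x.2.2
    nlinarith [mul_pos h1 h2, mul_pos h1 h3, mul_pos h2 h3, sq_nonneg x.2.2]

/-- The order x₁ ≤ x₂ is preserved. -/
lemma Gmap_order {q : ℝ} (hq0 : 0 < q) {x : ℝ × ℝ × ℝ}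
    (hx : x ∈ simplex2) (h12 : x.1 ≤ x.2.1) : (Gmap q x).1 ≤ (Gmap q x).2.1 := by
  obtain ⟨hs, h1, h2, h3⟩ := hx
  show x.1 ^ 2 + 2 * q * x.1 * x.2.2 ≤ x.2.1 ^ 2 + 2 * q * x.2.1 * x.2.2
  nlinarith [mul_nonneg (sub_nonneg.2 h12) h3.le, mul_nonneg (sub_nonneg.2 h12) h1.le,
    mul_nonneg (sub_nonneg.2 h12) h2.le]

/-- The region x₁ ≤ (2q-1)x₃ is forward invariant (within x₁ ≤ x₂). -/
lemma Gmap_region {q : ℝ} (hq0 : 0 < q) (hq1 : q < 1) {x : ℝ × ℝ × ℝ}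
    (hx : x ∈ simplex2) (h12 : x.1 ≤ x.2.1) (hC : x.1 ≤ (2*q-1) * x.2.2) :
    (Gmap q x).1 ≤ (2*q-1) * (Gmap q x).2.2 := by
  obtain ⟨hs, h1, h2, h3⟩ := hx
  have hq2 : 1/2 < q := by
    by_contra h
    push_neg at h
    nlinarith [mul_nonneg (by linarith : (0:ℝ) ≤ 1 - 2*q) h3.le]
  show x.1 ^ 2 + 2 * q * x.1 * x.2.2 ≤ (2*q-1) * (x.2.2 ^ 2 + 2 * x.1 * x.2.1
    + 2 * (1 - q) * x.1 * x.2.2 + 2 * (1 - q) * x.2.1 * x.2.2)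
  nlinarith [mul_nonneg (sub_nonneg.2 hC) h3.le, mul_nonneg (sub_nonneg.2 hC) h2.le,
    mul_nonneg (sub_nonneg.2 hC) h1.le, mul_nonneg (sub_nonneg.2 h12) h3.le,
    mul_pos h1 h3, mul_pos h1 h2, mul_pos h2 h3, sq_nonneg (x.1 - (2*q-1)*x.2.2),
    mul_nonneg (mul_nonneg (sub_nonneg.2 hC) h3.le) (sub_nonneg.2 hq2.le)]

/-- Shared tail: if the second coordinate converges and (2q-1)x₃ - x₁ → 0,
then the whole orbit converges to a point of the closed simplex. -/
lemma tail_lemma {q : ℝ} (hq0 : 0 < q) (x : ℕ → ℝ × ℝ × ℝ)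
    (hS : ∀ n, x n ∈ simplex2) (M : ℝ)
    (hf : Tendsto (fun n => (x n).2.1) atTop (𝓝 M))
    (hE : Tendsto (fun n => (2*q-1) * (x n).2.2 - (x n).1) atTop (𝓝 0)) :
    ∃ l : ℝ × ℝ × ℝ, (l.1 + l.2.1 + l.2.2 = 1 ∧ 0 ≤ l.1 ∧ 0 ≤ l.2.1 ∧ 0 ≤ l.2.2) ∧
      Tendsto x atTop (𝓝 l) := by
  have hq' : (2*q) ≠ 0 := by positivity
  -- x₃ n = (1 + e n - f n)/(2q)
  have hx3 : Tendsto (fun n => (x n).2.2) atTop (𝓝 ((1 - M) / (2*q))) := by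
    have h' : ∀ n, (x n).2.2 =
        (1 + ((2*q-1) * (x n).2.2 - (x n).1) - (x n).2.1) / (2*q) := by
      intro n
      rw [eq_div_iff hq']
      linear_combination (hS n).1
    have := (((tendsto_const_nhds (x := (1:ℝ))).add hE).sub hf).div_const (2*q)
    simp only [add_zero] at this
    exact Tendsto.congr (fun n => (h' n).symm) this
  have hx1 : Tendsto (fun n => (x n).1) atTop (𝓝 (1 - M - (1 - M) / (2*q))) := by
    have h : ∀ n, (x n).1 = 1 - (x n).2.1 - (x n).2.2 := by
      intro n; have hs := (hS n).1; linarith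
    have := ((tendsto_const_nhds (x := (1:ℝ))).sub hf).sub hx3
    exact Tendsto.congr (fun n => (h n).symm) this
  refine ⟨(1 - M - (1 - M) / (2*q), M, (1 - M) / (2*q)), ⟨by simp; ring, ?_, ?_, ?_⟩, ?_⟩
  · exact ge_of_tendsto' hx1 (fun n => (hS n).2.1.le)
  · exact ge_of_tendsto' hf (fun n => (hS n).2.2.1.le)
  · exact ge_of_tendsto' hx3 (fun n => (hS n).2.2.2.le)
  · exact hx1.prodMk_nhds (hf.prodMk_nhds hx3)

/-- Orbit convergence from any starting point with x₁ ≤ x₂. -/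
lemma main_aux {q : ℝ} (hq0 : 0 < q) (hq1 : q < 1) (x : ℕ → ℝ × ℝ × ℝ)
    (hrec : ∀ n, x (n+1) = Gmap q (x n))
    (hS0 : x 0 ∈ simplex2) (hO0 : (x 0).1 ≤ (x 0).2.1) :
    ∃ l : ℝ × ℝ × ℝ, (l.1 + l.2.1 + l.2.2 = 1 ∧ 0 ≤ l.1 ∧ 0 ≤ l.2.1 ∧ 0 ≤ l.2.2) ∧
      Tendsto x atTop (𝓝 l) := by
  have hS : ∀ n, x n ∈ simplex2 := by
    intro n
    induction n with
    | zero => exact hS0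
    | succ k ih => rw [hrec k]; exact Gmap_mem_simplex2 hq0 hq1 ih
  have hO : ∀ n, (x n).1 ≤ (x n).2.1 := by
    intro n
    induction n with
    | zero => exact hO0
    | succ k ih => rw [hrec k]; exact Gmap_order hq0 (hS k) ih
  -- key increment identity for x₂
  have hinc : ∀ n, (x (n+1)).2.1 - (x n).2.1
      = (x n).2.1 * ((2*q-1) * (x n).2.2 - (x n).1) := by
    intro n
    rw [hrec n]
    show (x n).2.1 ^ 2 + 2 * q * (x n).2.1 * (x n).2.2 - (x n).2.1 = _
    linear_combination (x n).2.1 * (hS n).1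
  by_cases hA : ∃ N, (x N).1 ≤ (2*q-1) * (x N).2.2
  · -- Case A: orbit enters the invariant region; x₂ eventually nondecreasing.
    obtain ⟨N, hN⟩ := hA
    set y : ℕ → ℝ × ℝ × ℝ := fun k => x (k + N) with hy
    have hyrec : ∀ k, y (k+1) = Gmap q (y k) := by
      intro k
      show x (k + 1 + N) = Gmap q (x (k + N))
      have : k + 1 + N = (k + N) + 1 := by ring
      rw [this, hrec]
    have hyS : ∀ k, y k ∈ simplex2 := fun k => hS (k + N)
    have hyO : ∀ k, (y k).1 ≤ (y k).2.1 := fun k => hO (k + N)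
    have hyP : ∀ k, (y k).1 ≤ (2*q-1) * (y k).2.2 := by
      intro k
      induction k with
      | zero =>
        show (x (0 + N)).1 ≤ (2*q-1) * (x (0 + N)).2.2
        rw [Nat.zero_add]
        exact hN
      | succ m ih => rw [hyrec m]; exact Gmap_region hq0 hq1 (hyS m) (hyO m) ih
    have hyinc : ∀ k, (y (k+1)).2.1 - (y k).2.1
        = (y k).2.1 * ((2*q-1) * (y k).2.2 - (y k).1) := by
      intro k
      show (x (k+1+N)).2.1 - _ = _
      have : k + 1 + N = (k + N) + 1 := by ring
      rw [this]
      exact hinc (k + N)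
    have hmono : Monotone (fun k => (y k).2.1) := by
      apply monotone_nat_of_le_succ
      intro k
      linarith [hyinc k, mul_nonneg (hyS k).2.2.1.le (sub_nonneg.2 (hyP k))]
    have hbdd : BddAbove (Set.range (fun k => (y k).2.1)) := by
      refine ⟨1, ?_⟩
      rintro _ ⟨k, rfl⟩
      obtain ⟨hs, h1, h2, h3⟩ := hyS k
      linarith
    have hf : Tendsto (fun k => (y k).2.1) atTop (𝓝 (⨆ k, (y k).2.1)) :=
      tendsto_atTop_ciSup hmono hbdd
    set M := ⨆ k, (y k).2.1 with hM
    have hM0 : 0 < M := lt_of_lt_of_le (hyS 0).2.2.1 (le_ciSup hbdd 0)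
    have hdiff : Tendsto (fun k => (y (k+1)).2.1 - (y k).2.1) atTop (𝓝 0) := by
      have h1 : Tendsto (fun k => (y (k+1)).2.1) atTop (𝓝 M) :=
        hf.comp (tendsto_add_atTop_nat 1)
      simpa using h1.sub hf
    have hE : Tendsto (fun k => (2*q-1) * (y k).2.2 - (y k).1) atTop (𝓝 0) := by
      have h : ∀ k, (2*q-1) * (y k).2.2 - (y k).1
          = ((y (k+1)).2.1 - (y k).2.1) / (y k).2.1 := by
        intro k
        rw [hyinc k]
        field_simp [(hyS k).2.2.1.ne']
      have := hdiff.div hf hM0.ne'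
      simpa using Tendsto.congr (fun k => (h k).symm) this
    obtain ⟨l, hl, hly⟩ := tail_lemma hq0 y hyS M hf hE
    refine ⟨l, hl, ?_⟩
    rw [← tendsto_add_atTop_iff_nat N]
    exact hly
  · -- Case B: x₂ is nonincreasing for all time.
    push_neg at hA
    have hanti : Antitone (fun n => (x n).2.1) := by
      apply antitone_nat_of_succ_le
      intro n
      have h1 : (x n).2.1 * ((2*q-1) * (x n).2.2 - (x n).1) ≤ 0 :=
        mul_nonpos_of_nonneg_of_nonpos (hS n).2.2.1.le (by linarith [hA n])
      linarith [hinc n]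
    have hbdd : BddBelow (Set.range (fun n => (x n).2.1)) := by
      refine ⟨0, ?_⟩
      rintro _ ⟨n, rfl⟩
      exact (hS n).2.2.1.le
    have hf : Tendsto (fun n => (x n).2.1) atTop (𝓝 (⨅ n, (x n).2.1)) :=
      tendsto_atTop_ciInf hanti hbdd
    set M := ⨅ n, (x n).2.1 with hM
    have hM0 : 0 ≤ M := le_ciInf (fun n => (hS n).2.2.1.le)
    rcases eq_or_lt_of_le hM0 with hMz | hMp
    · -- M = 0 : everything → (0,0,1)
      have hx2 : Tendsto (fun n => (x n).2.1) atTop (𝓝 0) := by rw [hMz]; exact hf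
      have hx1 : Tendsto (fun n => (x n).1) atTop (𝓝 0) := by
        apply squeeze_zero (fun n => (hS n).2.1.le) (fun n => hO n) hx2
      have hx3 : Tendsto (fun n => (x n).2.2) atTop (𝓝 1) := by
        have h : ∀ n, (x n).2.2 = 1 - (x n).1 - (x n).2.1 := by
          intro n; have hs := (hS n).1; linarith
        have := ((tendsto_const_nhds (x := (1:ℝ))).sub hx1).sub hx2
        simpa using Tendsto.congr (fun n => (h n).symm) this
      exact ⟨(0, 0, 1), ⟨by norm_num, le_refl 0, le_refl 0, by norm_num⟩,
        hx1.prodMk_nhds (hx2.prodMk_nhds hx3)⟩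
    · -- M > 0 : increments → 0 gives (2q-1)x₃ - x₁ → 0.
      have hlb : ∀ n, M ≤ (x n).2.1 := fun n => ciInf_le hbdd n
      have hdiff : Tendsto (fun n => (x (n+1)).2.1 - (x n).2.1) atTop (𝓝 0) := by
        have h1 : Tendsto (fun n => (x (n+1)).2.1) atTop (𝓝 M) :=
          hf.comp (tendsto_add_atTop_nat 1)
        simpa using h1.sub hf
      have hE : Tendsto (fun n => (2*q-1) * (x n).2.2 - (x n).1) atTop (𝓝 0) := by
        have h : ∀ n, (2*q-1) * (x n).2.2 - (x n).1
            = ((x (n+1)).2.1 - (x n).2.1) / (x n).2.1 := by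
          intro n
          rw [hinc n]
          field_simp [(hS n).2.2.1.ne']
        have := hdiff.div hf hMp.ne'
        simpa using Tendsto.congr (fun n => (h n).symm) this
      exact tail_lemma hq0 x hS M hf hE

/-- Swapping the first two coordinates commutes with Gmap. -/
lemma Gmap_swap (q : ℝ) (x : ℝ × ℝ × ℝ) :
    Gmap q (x.2.1, x.1, x.2.2) = ((Gmap q x).2.1, (Gmap q x).1, (Gmap q x).2.2) := by
  refine Prod.ext rfl (Prod.ext rfl ?_)
  show x.2.2 ^ 2 + 2 * x.2.1 * x.1 + 2 * (1 - q) * x.2.1 * x.2.2 + 2 * (1 - q) * x.1 * x.2.2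
    = x.2.2 ^ 2 + 2 * x.1 * x.2.1 + 2 * (1 - q) * x.1 * x.2.2 + 2 * (1 - q) * x.2.1 * x.2.2
  ring

/-- For every q ∈ (0,1) and every p ∈ Δ₂, the iterates G^n(p) converge to a
point of the closed simplex. -/
theorem iteratesG_converge (q : ℝ) (hq0 : 0 < q) (hq1 : q < 1)
    (p : ℝ × ℝ × ℝ) (hp : p ∈ simplex2) :
    ∃ l : ℝ × ℝ × ℝ, (l.1 + l.2.1 + l.2.2 = 1 ∧ 0 ≤ l.1 ∧ 0 ≤ l.2.1 ∧ 0 ≤ l.2.2) ∧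
      Tendsto (fun n => (Gmap q)^[n] p) atTop (𝓝 l) := by
  rcases le_total p.1 p.2.1 with h | h
  · exact main_aux hq0 hq1 (fun n => (Gmap q)^[n] p)
      (fun n => Function.iterate_succ_apply' (Gmap q) n p) hp h
  · -- apply the lemma to the swapped point
    set σ : ℝ × ℝ × ℝ → ℝ × ℝ × ℝ := fun x => (x.2.1, x.1, x.2.2) with hσ
    have hcomm : ∀ n (x : ℝ × ℝ × ℝ), (Gmap q)^[n] (σ x) = σ ((Gmap q)^[n] x) := by
      intro n
      induction n with
      | zero => intro x; rfl
      | succ k ih =>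
        intro x
        rw [Function.iterate_succ_apply', Function.iterate_succ_apply', ih x]
        exact Gmap_swap q _
    obtain ⟨hs, h1, h2, h3⟩ := hp
    obtain ⟨l, ⟨hl1, hl2, hl3, hl4⟩, hlt⟩ := main_aux hq0 hq1
      (fun n => (Gmap q)^[n] (σ p))
      (fun n => Function.iterate_succ_apply' (Gmap q) n (σ p))
      ⟨by show p.2.1 + p.1 + p.2.2 = 1; linarith, h2, h1, h3⟩ h
    have hσc : Continuous σ := by fun_prop
    refine ⟨σ l, ⟨by show l.2.1 + l.1 + l.2.2 = 1; linarith, hl3, hl2, hl4⟩, ?_⟩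
    have := (hσc.tendsto l).comp hlt
    apply this.congr
    intro n
    show σ ((Gmap q)^[n] (σ p)) = (Gmap q)^[n] p
    rw [hcomm n p]
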